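/- Let n ≥ 2 be an integer, let l be a positive multiple of n, let ω ∈ ℂ be a primitive l-th root of unity, and let t be an integer with 0 ≤ t ≤ l−1. Consider the degree n polynomial p(z) = (z − ω^t − 1) · F_n(ω^t, z) in ℂ[z]. If t ≠ 0 and (l/n) divides t, then p has exactly n−1 distinct complex roots; otherwise p has exactly n distinct complex roots. -/
import Mathlib

open Polynomial


/-- The Dickson polynomials of the second kind: `dickF y z 1 = 1`, `dickF y z 2 = z`,
`dickF y z s = z * dickF y z (s-1) - y * dickF y z (s-2)` for `s ≥ 3`. -/
def dickF {R : Type*} [CommRing R] (y z : R) : ℕ → R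
  | 0 => 0
  | 1 => 1
  | (s + 2) => z * dickF y z (s + 1) - y * dickF y z s

lemma dickF_key (β γ : ℂ) (n : ℕ) :
    (dickF (Polynomial.C (β * γ)) Polynomial.X n).eval (β + γ) * (β - γ) = β ^ n - γ ^ n := by
  induction n using Nat.twoStepInduction with
  | zero => simp [dickF]
  | one => simp [dickF]
  | more s ih1 ih2 =>
    simp only [dickF, Polynomial.eval_sub, Polynomial.eval_mul, Polynomial.eval_C,
      Polynomial.eval_X]
    linear_combination (β + γ) * ih2 - (β * γ) * ih1

lemma dickF_one_eval (n : ℕ) : (dickF (Polynomial.C 1) (Polynomial.X : ℂ[X]) n).eval 2 = n := by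
  induction n using Nat.twoStepInduction with
  | zero => simp [dickF]
  | one => simp [dickF]
  | more s ih1 ih2 =>
    simp only [dickF, Polynomial.eval_sub, Polynomial.eval_mul, Polynomial.eval_C,
      Polynomial.eval_X, ih1, ih2]
    push_cast
    ring

lemma dickF_monic (y : ℂ) (s : ℕ) :
    (dickF (Polynomial.C y) (Polynomial.X : ℂ[X]) (s + 1)).Monic ∧
      (dickF (Polynomial.C y) (Polynomial.X : ℂ[X]) (s + 1)).natDegree = s := by
  induction s using Nat.twoStepInduction with
  | zero => simp [dickF, monic_one]
  | one => simp [dickF, monic_X]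
  | more s ih1 ih2 =>
    have h3 : dickF (Polynomial.C y) (Polynomial.X : ℂ[X]) (s + 3) =
        Polynomial.X * dickF (Polynomial.C y) Polynomial.X (s + 2) -
          Polynomial.C y * dickF (Polynomial.C y) Polynomial.X (s + 1) := rfl
    obtain ⟨hm1, hd1⟩ := ih1
    obtain ⟨hm2, hd2⟩ := ih2
    have hmX : (Polynomial.X * dickF (Polynomial.C y) Polynomial.X (s + 2)).Monic :=
      monic_X.mul hm2
    have hdX : (Polynomial.X * dickF (Polynomial.C y) Polynomial.X (s + 2)).natDegree = s + 2 := by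
      rw [(monic_X (R:=ℂ)).natDegree_mul hm2, natDegree_X, hd2]; omega
    have hlt : (Polynomial.C y * dickF (Polynomial.C y) Polynomial.X (s + 1)).natDegree
        < (Polynomial.X * dickF (Polynomial.C y) Polynomial.X (s + 2)).natDegree := by
      rw [hdX]
      calc (Polynomial.C y * dickF (Polynomial.C y) Polynomial.X (s + 1)).natDegree
          ≤ (dickF (Polynomial.C y) (Polynomial.X : ℂ[X]) (s + 1)).natDegree :=
            natDegree_C_mul_le _ _
        _ = s := hd1
        _ < s + 2 := by omega
    rw [h3]
    exact ⟨hmX.sub_of_left (degree_lt_degree hlt),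
      by rw [natDegree_sub_eq_left_of_natDegree_lt hlt, hdX]⟩

/-- The number of distinct complex roots of `(z - ω^t - 1) · F_n(ω^t, z)`. -/
theorem stmt9 (n l t : ℕ) (hn : 2 ≤ n) (hl : 0 < l) (hnl : n ∣ l) (ω : ℂ)
    (hω : IsPrimitiveRoot ω l) (ht : t ≤ l - 1) :
    ((Polynomial.X - Polynomial.C (ω ^ t) - 1) *
        dickF (Polynomial.C (ω ^ t)) Polynomial.X n).roots.toFinset.card =
      if t ≠ 0 ∧ (l / n) ∣ t then n - 1 else n := by
  classical
  have hω0 : ω ≠ 0 := hω.ne_zero (by omega)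
  set y : ℂ := ω ^ t with hy
  have hy0 : y ≠ 0 := pow_ne_zero _ hω0
  set δ : ℂ := Complex.exp (Complex.log y / 2) with hδ
  have hδ0 : δ ≠ 0 := Complex.exp_ne_zero _
  have hδ2 : δ * δ = y := by
    rw [hδ, ← Complex.exp_add, add_halves, Complex.exp_log hy0]
  obtain ⟨ζ, hζ⟩ : ∃ ζ : ℂ, IsPrimitiveRoot ζ (2 * n) :=
    ⟨_, Complex.isPrimitiveRoot_exp (2 * n) (by omega)⟩
  have hζ0 : ζ ≠ 0 := hζ.ne_zero (by omega)
  have hζ2n : ζ ^ (2 * n) = 1 := hζ.pow_eq_one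
  set F : ℂ[X] := dickF (Polynomial.C y) Polynomial.X n with hF
  obtain ⟨hFm, hFd⟩ : F.Monic ∧ F.natDegree = n - 1 := by
    have := dickF_monic y (n - 1)
    rwa [show n - 1 + 1 = n by omega] at this
  have hF0 : F ≠ 0 := hFm.ne_zero
  set a : ℕ → ℂ := fun k => δ * ζ ^ k + δ * ζ ^ (2 * n - k) with ha
  -- each a k (1 ≤ k ≤ n-1) is a root of F
  have hroot : ∀ k ∈ Finset.Icc 1 (n - 1), F.eval (a k) = 0 := by
    intro k hk
    simp only [Finset.mem_Icc] at hk
    have hk2n : k + (2 * n - k) = 2 * n := by omega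
    have hprod : (δ * ζ ^ k) * (δ * ζ ^ (2 * n - k)) = y := by
      rw [mul_mul_mul_comm, ← pow_add, hk2n, hζ2n, hδ2, mul_one]
    have hne : δ * ζ ^ k - δ * ζ ^ (2 * n - k) ≠ 0 := by
      intro h
      have h1 : ζ ^ k = ζ ^ (2 * n - k) :=
        mul_left_cancel₀ hδ0 (sub_eq_zero.mp h)
      have h2 : ζ ^ (2 * k) = 1 := by
        have h3 : ζ ^ k * ζ ^ k = ζ ^ (2 * n - k) * ζ ^ k := by rw [h1]
        rw [← pow_add, ← pow_add, show 2 * n - k + k = 2 * n by omega, hζ2n] at h3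
        rw [show 2 * k = k + k by ring, h3]
      have hdvd := hζ.pow_eq_one_iff_dvd (2 * k) |>.mp h2
      have := Nat.le_of_dvd (by omega) hdvd
      omega
    have hpow : (δ * ζ ^ k) ^ n = (δ * ζ ^ (2 * n - k)) ^ n := by
      have e1 : ζ ^ ((2 * n - k) * n) * ζ ^ (k * n) = 1 := by
        rw [← pow_add, show (2 * n - k) * n + k * n = (2 * n) * n by
          have : (2 * n - k) + k = 2 * n := by omega
          nlinarith [Nat.sub_add_cancel (show k ≤ 2 * n by omega)],
          pow_mul, hζ2n, one_pow]
      have e2 : ζ ^ (k * n) * ζ ^ (k * n) = 1 := by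
        rw [← pow_add, show k * n + k * n = (2 * n) * k by ring, pow_mul, hζ2n, one_pow]
      have e3 : ζ ^ ((2 * n - k) * n) = ζ ^ (k * n) :=
        mul_right_cancel₀ (pow_ne_zero _ hζ0) (e1.trans e2.symm)
      rw [mul_pow, mul_pow, ← pow_mul, ← pow_mul, e3]
    have key := dickF_key (δ * ζ ^ k) (δ * ζ ^ (2 * n - k)) n
    rw [hprod, hpow, sub_self] at key
    have := mul_eq_zero.mp key
    rcases this with h | h
    · exact h
    · exact absurd h hne
  -- injectivity of a on Icc 1 (n-1)
  have hinj : Set.InjOn a (Finset.Icc 1 (n - 1)) := by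
    intro k hk m hm h
    simp only [Finset.coe_Icc, Set.mem_Icc] at hk hm
    have hik : ζ ^ (2 * n - k) * ζ ^ k = 1 := by
      rw [← pow_add, show 2 * n - k + k = 2 * n by omega, hζ2n]
    have him : ζ ^ (2 * n - m) * ζ ^ m = 1 := by
      rw [← pow_add, show 2 * n - m + m = 2 * n by omega, hζ2n]
    have h' : ζ ^ k + ζ ^ (2 * n - k) = ζ ^ m + ζ ^ (2 * n - m) := by
      have : δ * (ζ ^ k + ζ ^ (2 * n - k)) = δ * (ζ ^ m + ζ ^ (2 * n - m)) := by
        simpa [ha, mul_add] using h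
      exact mul_left_cancel₀ hδ0 this
    have hfac : (ζ ^ k - ζ ^ m) * (ζ ^ k * ζ ^ m - 1) = 0 := by
      have hc : ζ ^ (2 * n - k) = (ζ ^ k)⁻¹ := by
        field_simp
        linear_combination hik
      have hd : ζ ^ (2 * n - m) = (ζ ^ m)⁻¹ := by
        field_simp
        linear_combination him
      rw [hc, hd] at h'
      have hk0 : (ζ : ℂ) ^ k ≠ 0 := pow_ne_zero _ hζ0
      have hm0 : (ζ : ℂ) ^ m ≠ 0 := pow_ne_zero _ hζ0
      field_simp at h'
      linear_combination h'
    rcases mul_eq_zero.mp hfac with hcase | hcase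
    · exact hζ.pow_inj (by omega) (by omega) (sub_eq_zero.mp hcase)
    · exfalso
      have h1 : ζ ^ (k + m) = 1 := by rw [pow_add]; linear_combination hcase
      have hdvd := hζ.pow_eq_one_iff_dvd (k + m) |>.mp h1
      have := Nat.le_of_dvd (by omega) hdvd
      omega
  -- the set of roots of F
  set S : Finset ℂ := (Finset.Icc 1 (n - 1)).image a with hS
  have hcardS : S.card = n - 1 := by
    rw [hS, Finset.card_image_of_injOn hinj, Nat.card_Icc]
    omega
  have hsub : S ⊆ F.roots.toFinset := by
    intro x hx
    rw [hS, Finset.mem_image] at hx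
    obtain ⟨k, hk, rfl⟩ := hx
    rw [Multiset.mem_toFinset, Polynomial.mem_roots hF0]
    exact hroot k hk
  have hSF : F.roots.toFinset = S := by
    refine (Finset.eq_of_subset_of_card_le hsub ?_).symm
    calc F.roots.toFinset.card ≤ Multiset.card F.roots := Multiset.toFinset_card_le _
      _ ≤ F.natDegree := F.card_roots'
      _ = n - 1 := hFd
      _ = S.card := hcardS.symm
  -- the linear factor
  have hlin : (Polynomial.X - Polynomial.C y - 1 : ℂ[X]) =
      Polynomial.X - Polynomial.C (y + 1) := by
    rw [map_add, map_one]; ring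
  have hfin : ((Polynomial.X - Polynomial.C y - 1) * F).roots.toFinset = insert (y + 1) S := by
    rw [hlin, Polynomial.roots_mul (mul_ne_zero (Polynomial.X_sub_C_ne_zero _) hF0),
      Multiset.toFinset_add, Polynomial.roots_X_sub_C, hSF, Multiset.toFinset_singleton,
      ← Finset.insert_eq]
  -- membership characterization
  have heval2 : F.eval (y + 1) = 0 ↔ (t ≠ 0 ∧ (l / n) ∣ t) := by
    by_cases h0 : t = 0
    · have hy1 : y = 1 := by rw [hy, h0, pow_zero]
      have hev : F.eval (y + 1) = n := by
        rw [hF, hy1, show (1 + 1 : ℂ) = 2 by norm_num]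
        exact dickF_one_eval n
      rw [hev]
      constructor
      · intro hzero
        exfalso
        have : (n : ℂ) ≠ 0 := Nat.cast_ne_zero.mpr (by omega)
        exact this hzero
      · rintro ⟨h, -⟩
        exact absurd h0 h
    · have htl : t < l := by omega
      have hy1 : y - 1 ≠ 0 := by
        rw [sub_ne_zero]
        exact hω.pow_ne_one_of_pos_of_lt (by omega) htl
      have key := dickF_key y 1 n
      rw [mul_one, one_pow] at key
      obtain ⟨q, hq⟩ := hnl
      have hq' : l / n = q := by rw [hq]; exact Nat.mul_div_cancel_left q (by omega)
      have hiff : y ^ n = 1 ↔ (l / n) ∣ t := by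
        rw [hy, ← pow_mul, hω.pow_eq_one_iff_dvd, hq', hq]
        constructor
        · intro hd
          refine (Nat.mul_dvd_mul_iff_right (show 0 < n by omega)).mp ?_
          rwa [Nat.mul_comm n q] at hd
        · intro hd
          obtain ⟨c, hc⟩ := hd
          exact ⟨c, by rw [hc]; ring⟩
      constructor
      · intro hr
        rw [hF] at hr
        rw [hr, zero_mul] at key
        have hyn : y ^ n = 1 := by linear_combination -key
        exact ⟨h0, hiff.mp hyn⟩
      · rintro ⟨-, hdvd⟩
        have hyn : y ^ n - 1 = 0 := by rw [hiff.mpr hdvd, sub_self]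
        rw [hyn] at key
        rw [hF]
        exact (mul_eq_zero.mp key).resolve_right hy1
  have hmem : (y + 1) ∈ S ↔ (t ≠ 0 ∧ (l / n) ∣ t) := by
    rw [← hSF, Multiset.mem_toFinset, Polynomial.mem_roots hF0]
    exact heval2
  rw [hfin]
  by_cases hcond : t ≠ 0 ∧ (l / n) ∣ t
  · rw [if_pos hcond, Finset.card_insert_of_mem (hmem.mpr hcond), hcardS]
  · rw [if_neg hcond, Finset.card_insert_of_notMem (fun hm => hcond (hmem.mp hm)), hcardS]
    omega
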